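/- Let F = x + F₂ + F₃ + F₄ and G = z + G₂ + ⋯ + G₆ with Fᵢ, Gᵢ ∈ ℂ[x,y,z] homogeneous of degree i. Suppose F₄ = H² and G₆ = αH³, where H is a squarefree homogeneous polynomial of degree 2 and α ∈ ℂ, α ≠ 0. If deg[F,G] < 9, then G₅ = (3/2)·α·H·F₃. -/

import Mathlib

open MvPolynomial

noncomputable def jacMinor (f g : MvPolynomial (Fin 3) ℂ) (i j : Fin 3) :
    MvPolynomial (Fin 3) ℂ :=
  pderiv i f * pderiv j g - pderiv j f * pderiv i g

open Finsupp

namespace SA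

variable {σ : Type*} [DecidableEq σ]

set_option linter.unusedSectionVars false

open Finsupp

variable {σ : Type*} [DecidableEq σ]

lemma fdeg_add (a b : σ →₀ ℕ) : (a + b).degree = a.degree + b.degree := by
  simp [degree_eq_weight_one, map_add]

lemma fdeg_single (i : σ) : (Finsupp.single i 1).degree = 1 := by
  simp [Finsupp.degree_apply, Finsupp.support_single_ne_zero _ one_ne_zero]

lemma sub_single_add {v : σ →₀ ℕ} {i : σ} (h : v i ≠ 0) :
    (v - Finsupp.single i 1) + Finsupp.single i 1 = v := by
  ext j
  by_cases hj : j = i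
  · have hne : v i ≠ 0 := h
    simp only [hj, Finsupp.add_apply, Finsupp.tsub_apply, Finsupp.single_eq_same]
    omega
  · simp [Finsupp.single_apply, Ne.symm hj]

lemma pderiv_homog {f : MvPolynomial σ ℂ} {n : ℕ} (i : σ)
    (hf : f.IsHomogeneous n) : (pderiv i f).IsHomogeneous (n - 1) := by
  conv_lhs => rw [f.as_sum]
  rw [map_sum]
  apply MvPolynomial.IsHomogeneous.sum
  intro v hv
  rw [pderiv_monomial]
  by_cases hvi : v i = 0
  · rw [hvi]; simp only [Nat.cast_zero, mul_zero, map_zero]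
    exact isHomogeneous_zero _ _ _
  · apply isHomogeneous_monomial
    have hd : v.degree = n := by
      have := hf (MvPolynomial.mem_support_iff.mp hv)
      rwa [degree_eq_weight_one]
    have h1 : (v - Finsupp.single i 1).degree + 1 = n := by
      have := fdeg_add (v - Finsupp.single i 1) (Finsupp.single i 1)
      rw [sub_single_add hvi, fdeg_single] at this
      omega
    omega

lemma euler [Fintype σ] {f : MvPolynomial σ ℂ} {n : ℕ} (hf : f.IsHomogeneous n) :
    ∑ i, X i * pderiv i f = (n : MvPolynomial σ ℂ) * f := by
  have lhs_eq : ∀ i : σ, X i * pderiv i f = ∑ v ∈ f.support, X i * pderiv i (monomial v (coeff v f)) := by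
    intro i
    conv_lhs => rw [f.as_sum]
    rw [map_sum, Finset.mul_sum]
  rw [Finset.sum_congr rfl fun i _ => lhs_eq i, Finset.sum_comm]
  conv_rhs => rw [f.as_sum, Finset.mul_sum]
  apply Finset.sum_congr rfl
  intro v hv
  have hd : v.degree = n := by
    have := hf (MvPolynomial.mem_support_iff.mp hv)
    rwa [degree_eq_weight_one]
  have step : ∀ i : σ, X i * pderiv i (monomial v (coeff v f))
      = monomial v (coeff v f * (v i : ℂ)) := by
    intro i
    rw [pderiv_monomial]
    by_cases hvi : v i = 0
    · rw [hvi]; simp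
    · rw [X, monomial_mul, one_mul, add_comm, sub_single_add hvi]
  rw [Finset.sum_congr rfl fun i _ => step i]
  rw [← map_sum, ← Finset.mul_sum]
  have : ∑ i : σ, ((v i : ℂ)) = (n : ℂ) := by
    rw [← hd, Finsupp.degree_apply]
    rw [Finset.sum_subset (Finset.subset_univ v.support)]
    · simp
    · intro x _ hx
      simp only [Finsupp.mem_support_iff, not_not] at hx
      simp [hx]
  rw [this]
  rw [show ((n : MvPolynomial σ ℂ)) = C (n : ℂ) by simp, C_mul_monomial, mul_comm]

lemma fdeg_add' (a b : σ →₀ ℕ) : (a + b).degree = a.degree + b.degree := by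
  simp [degree_eq_weight_one, map_add]

lemma comp_mul_ge (p q : MvPolynomial σ ℂ) (a b : ℕ)
    (hp : ∀ u : σ →₀ ℕ, coeff u p ≠ 0 → a ≤ u.degree)
    (hq : ∀ u : σ →₀ ℕ, coeff u q ≠ 0 → b ≤ u.degree) :
    homogeneousComponent (a + b) (p * q) =
      homogeneousComponent a p * homogeneousComponent b q := by
  classical
  ext m
  rw [coeff_homogeneousComponent, coeff_mul, coeff_mul]
  by_cases hm : m.degree = a + b
  · rw [if_pos hm]
    apply Finset.sum_congr rfl
    intro x hx
    rw [Finset.HasAntidiagonal.mem_antidiagonal] at hx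
    rw [coeff_homogeneousComponent, coeff_homogeneousComponent]
    have hdeg : x.1.degree + x.2.degree = a + b := by rw [← fdeg_add', hx, hm]
    by_cases h1 : x.1.degree = a
    · rw [if_pos h1, if_pos (by omega)]
    · rw [if_neg h1, zero_mul]
      by_cases hc1 : coeff x.1 p = 0
      · rw [hc1, zero_mul]
      · have ha1 := hp _ hc1
        have : coeff x.2 q = 0 := by
          by_contra hc2
          have := hq _ hc2
          omega
        rw [this, mul_zero]
  · rw [if_neg hm]
    symm
    apply Finset.sum_eq_zero
    intro x hx
    rw [Finset.HasAntidiagonal.mem_antidiagonal] at hx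
    rw [coeff_homogeneousComponent, coeff_homogeneousComponent]
    have hdeg : x.1.degree + x.2.degree = m.degree := by rw [← fdeg_add', hx]
    by_cases h1 : x.1.degree = a
    · rw [if_pos h1, if_neg (by omega), mul_zero]
    · rw [if_neg h1, zero_mul]

lemma comp_mul_le (p q : MvPolynomial σ ℂ) (a b : ℕ)
    (hp : ∀ u : σ →₀ ℕ, coeff u p ≠ 0 → u.degree ≤ a)
    (hq : ∀ u : σ →₀ ℕ, coeff u q ≠ 0 → u.degree ≤ b) :
    homogeneousComponent (a + b) (p * q) =
      homogeneousComponent a p * homogeneousComponent b q := by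
  classical
  ext m
  rw [coeff_homogeneousComponent, coeff_mul, coeff_mul]
  by_cases hm : m.degree = a + b
  · rw [if_pos hm]
    apply Finset.sum_congr rfl
    intro x hx
    rw [Finset.HasAntidiagonal.mem_antidiagonal] at hx
    rw [coeff_homogeneousComponent, coeff_homogeneousComponent]
    have hdeg : x.1.degree + x.2.degree = a + b := by rw [← fdeg_add', hx, hm]
    by_cases h1 : x.1.degree = a
    · rw [if_pos h1, if_pos (by omega)]
    · rw [if_neg h1, zero_mul]
      by_cases hc1 : coeff x.1 p = 0
      · rw [hc1, zero_mul]
      · have ha1 := hp _ hc1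
        have : coeff x.2 q = 0 := by
          by_contra hc2
          have := hq _ hc2
          omega
        rw [this, mul_zero]
  · rw [if_neg hm]
    symm
    apply Finset.sum_eq_zero
    intro x hx
    rw [Finset.HasAntidiagonal.mem_antidiagonal] at hx
    rw [coeff_homogeneousComponent, coeff_homogeneousComponent]
    have hdeg : x.1.degree + x.2.degree = m.degree := by rw [← fdeg_add', hx]
    by_cases h1 : x.1.degree = a
    · rw [if_pos h1, if_neg (by omega), mul_zero]
    · rw [if_neg h1, zero_mul]

/-- Divisor factors of a homogeneous polynomial are homogeneous. -/
lemma homog_of_mul {p q : MvPolynomial σ ℂ} {n : ℕ} (hp : p ≠ 0) (hq : q ≠ 0)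
    (h : (p * q).IsHomogeneous n) :
    ∃ a b : ℕ, a + b = n ∧ p.IsHomogeneous a ∧ q.IsHomogeneous b := by
  classical
  have hpne : p.support.Nonempty := support_nonempty.mpr hp
  have hqne : q.support.Nonempty := support_nonempty.mpr hq
  set ap := p.support.inf' hpne Finsupp.degree with hap
  set Ap := p.support.sup' hpne Finsupp.degree with hAp
  set aq := q.support.inf' hqne Finsupp.degree with haq
  set Aq := q.support.sup' hqne Finsupp.degree with hAq
  have hpmin : ∀ u : σ →₀ ℕ, coeff u p ≠ 0 → ap ≤ u.degree := fun u hu =>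
    Finset.inf'_le _ (MvPolynomial.mem_support_iff.mpr hu)
  have hqmin : ∀ u : σ →₀ ℕ, coeff u q ≠ 0 → aq ≤ u.degree := fun u hu =>
    Finset.inf'_le _ (MvPolynomial.mem_support_iff.mpr hu)
  have hpmax : ∀ u : σ →₀ ℕ, coeff u p ≠ 0 → u.degree ≤ Ap := fun u hu =>
    Finset.le_sup' _ (MvPolynomial.mem_support_iff.mpr hu)
  have hqmax : ∀ u : σ →₀ ℕ, coeff u q ≠ 0 → u.degree ≤ Aq := fun u hu =>
    Finset.le_sup' _ (MvPolynomial.mem_support_iff.mpr hu)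
  have hcompp : homogeneousComponent ap p ≠ 0 := by
    obtain ⟨m, hm, hmeq⟩ := Finset.exists_mem_eq_inf' hpne Finsupp.degree
    intro h0
    have h1 := congrArg (coeff m) h0
    rw [coeff_homogeneousComponent, coeff_zero, if_pos (by rw [← hap] at hmeq; omega)] at h1
    exact (MvPolynomial.mem_support_iff.mp hm) h1
  have hcompq : homogeneousComponent aq q ≠ 0 := by
    obtain ⟨m, hm, hmeq⟩ := Finset.exists_mem_eq_inf' hqne Finsupp.degree
    intro h0
    have h1 := congrArg (coeff m) h0
    rw [coeff_homogeneousComponent, coeff_zero, if_pos (by rw [← haq] at hmeq; omega)] at h1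
    exact (MvPolynomial.mem_support_iff.mp hm) h1
  have hcompP : homogeneousComponent Ap p ≠ 0 := by
    obtain ⟨m, hm, hmeq⟩ := Finset.exists_mem_eq_sup' hpne Finsupp.degree
    intro h0
    have h1 := congrArg (coeff m) h0
    rw [coeff_homogeneousComponent, coeff_zero, if_pos (by rw [← hAp] at hmeq; omega)] at h1
    exact (MvPolynomial.mem_support_iff.mp hm) h1
  have hcompQ : homogeneousComponent Aq q ≠ 0 := by
    obtain ⟨m, hm, hmeq⟩ := Finset.exists_mem_eq_sup' hqne Finsupp.degree
    intro h0
    have h1 := congrArg (coeff m) h0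
    rw [coeff_homogeneousComponent, coeff_zero, if_pos (by rw [← hAq] at hmeq; omega)] at h1
    exact (MvPolynomial.mem_support_iff.mp hm) h1
  have hmem : p * q ∈ homogeneousSubmodule σ ℂ n := (mem_homogeneousSubmodule n _).mpr h
  have hmin : ap + aq = n := by
    by_contra hne
    have h2 := homogeneousComponent_of_mem (m := ap + aq) hmem
    rw [if_neg hne, comp_mul_ge p q ap aq hpmin hqmin] at h2
    exact mul_ne_zero hcompp hcompq h2
  have hmax : Ap + Aq = n := by
    by_contra hne
    have h2 := homogeneousComponent_of_mem (m := Ap + Aq) hmem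
    rw [if_neg hne, comp_mul_le p q Ap Aq hpmax hqmax] at h2
    exact mul_ne_zero hcompP hcompQ h2
  have hple : ap ≤ Ap := by
    obtain ⟨m, hm⟩ := hpne
    exact le_trans (Finset.inf'_le _ hm) (Finset.le_sup' _ hm)
  have hqle : aq ≤ Aq := by
    obtain ⟨m, hm⟩ := hqne
    exact le_trans (Finset.inf'_le _ hm) (Finset.le_sup' _ hm)
  refine ⟨ap, aq, hmin, ?_, ?_⟩
  · intro d hd
    rw [show (weight (1 : σ → ℕ)) = degree from degree_eq_weight_one.symm]
    have h1 := hpmin d hd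
    have h2 := hpmax d hd
    omega
  · intro d hd
    rw [show (weight (1 : σ → ℕ)) = degree from degree_eq_weight_one.symm]
    have h1 := hqmin d hd
    have h2 := hqmax d hd
    omega


lemma sfaux_dvd_of_forall_prime_dvd {A : Type*} [CommMonoidWithZero A]
    [UniqueFactorizationMonoid A] [Nontrivial A] {H Q : A} (hsf : Squarefree H)
    (hprimes : ∀ p, Prime p → p ∣ H → p ∣ Q) : H ∣ Q := by
  revert hsf hprimes
  refine UniqueFactorizationMonoid.induction_on_prime
    (P := fun H => Squarefree H → (∀ p, Prime p → p ∣ H → p ∣ Q) → H ∣ Q) H ?_ ?_ ?_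
  · intro hsf _
    exact absurd hsf not_squarefree_zero
  · intro x hx _ _
    exact hx.dvd
  · intro a p ha hp ih hsf hdvd
    have hpa : ¬ p ∣ a := fun hdvd' => hp.not_isUnit (hsf p (mul_dvd_mul_left p hdvd'))
    have haQ : a ∣ Q := ih (hsf.squarefree_of_dvd (dvd_mul_left a p))
      (fun q hq hqa => hdvd q hq (hqa.trans (dvd_mul_left a p)))
    have hpQ : p ∣ Q := hdvd p hp (dvd_mul_right p a)
    obtain ⟨c, rfl⟩ := haQ
    have hc : p ∣ c := (hp.dvd_or_dvd hpQ).resolve_left hpa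
    obtain ⟨d, rfl⟩ := hc
    exact ⟨d, (mul_left_comm a p d).trans (mul_assoc p a d).symm⟩

lemma sfaux_eq_C {q : MvPolynomial σ ℂ} (h : q.totalDegree = 0) :
    q = C (coeff 0 q) := by
  ext d
  by_cases hd : d = 0
  · subst hd; simp
  · rw [coeff_C, if_neg (Ne.symm hd)]
    by_contra hc
    apply hd
    have := (totalDegree_eq_zero_iff σ q).mp h d (MvPolynomial.mem_support_iff.mpr hc)
    ext x
    exact this x

lemma exists_pderiv_not_dvd [Fintype σ]
    {q Hh : MvPolynomial σ ℂ} {n : ℕ} (hq : Prime q) (hdvd : q ∣ Hh)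
    (hsf : Squarefree Hh) (hH : Hh.IsHomogeneous n) :
    ∃ i, ¬ q ∣ pderiv i Hh := by
  by_contra hcon
  push_neg at hcon
  obtain ⟨r, rfl⟩ := hdvd
  have hq0 : q ≠ 0 := hq.ne_zero
  have hr0 : r ≠ 0 := by
    rintro rfl
    rw [mul_zero] at hsf
    exact not_squarefree_zero hsf
  obtain ⟨a, b, hab, hqh, hrh⟩ := homog_of_mul hq0 hr0 hH
  have hqr : ¬ q ∣ r := fun h => hq.not_isUnit (hsf q (mul_dvd_mul_left q h))
  have ha0 : a ≠ 0 := by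
    intro h0
    subst h0
    have hdeg : q.totalDegree = 0 := Nat.le_zero.mp hqh.totalDegree_le
    obtain ⟨c, hc⟩ : ∃ c, q = C c := ⟨_, sfaux_eq_C hdeg⟩
    have hcne : c ≠ 0 := by
      rintro rfl
      rw [map_zero] at hc
      exact hq0 hc
    apply hq.not_isUnit
    rw [hc]
    exact IsUnit.of_mul_eq_one (C c⁻¹) (by rw [← map_mul, mul_inv_cancel₀ hcne, map_one])
  have hdq : ∀ i, pderiv i q = 0 := by
    intro i
    have h2 := hcon i
    rw [pderiv_mul] at h2
    have h1 : q ∣ pderiv i q * r := by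
      have h3 := dvd_sub h2 (Dvd.intro (pderiv i r) rfl)
      rwa [add_sub_cancel_right] at h3
    have h4 : q ∣ pderiv i q := (hq.dvd_or_dvd h1).resolve_right hqr
    by_contra hne
    obtain ⟨t, ht⟩ := h4
    have ht0 : t ≠ 0 := by
      rintro rfl
      rw [mul_zero] at ht
      exact hne ht
    have hdqh : (pderiv i q).IsHomogeneous (a - 1) := pderiv_homog i hqh
    rw [ht] at hdqh
    obtain ⟨a', b', hab', hq', ht'⟩ := homog_of_mul hq0 ht0 hdqh
    have haa : a' = a := hq'.inj_right hqh hq0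
    omega
  have heu := euler hqh
  have hz : (a : MvPolynomial σ ℂ) * q = 0 := by
    rw [← heu]
    apply Finset.sum_eq_zero
    intro i _
    rw [hdq i, mul_zero]
  rcases mul_eq_zero.mp hz with h | h
  · rw [show ((a : ℕ) : MvPolynomial σ ℂ) = C (a : ℂ) by simp] at h
    exact ha0 (Nat.cast_eq_zero.mp (C_eq_zero.mp h))
  · exact hq0 h

lemma H_dvd_of [Fintype σ] {Hh Q : MvPolynomial σ ℂ} {n : ℕ}
    (hsf : Squarefree Hh) (hH : Hh.IsHomogeneous n)
    (hdvd : ∀ i, Hh ∣ Q * pderiv i Hh) : Hh ∣ Q := by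
  apply sfaux_dvd_of_forall_prime_dvd hsf
  intro p hp hpH
  obtain ⟨i, hi⟩ := exists_pderiv_not_dvd hp hpH hsf hH
  have hpd : p ∣ Q * pderiv i Hh := hpH.trans (hdvd i)
  exact (hp.dvd_or_dvd hpd).resolve_right hi

end SA

lemma pderiv_homog3 {f : MvPolynomial (Fin 3) ℂ} {n : ℕ} (i : Fin 3)
    (hf : f.IsHomogeneous n) : (pderiv i f).IsHomogeneous (n - 1) :=
  SA.pderiv_homog i hf

lemma jac_homog {A B : MvPolynomial (Fin 3) ℂ} {a b : ℕ} (hA : A.IsHomogeneous a)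
    (hB : B.IsHomogeneous b) (i j : Fin 3) :
    (jacMinor A B i j).IsHomogeneous (a - 1 + (b - 1)) :=
  ((pderiv_homog3 i hA).mul (pderiv_homog3 j hB)).sub
    ((pderiv_homog3 j hA).mul (pderiv_homog3 i hB))

lemma compne {t : MvPolynomial (Fin 3) ℂ} {d : ℕ} (ht : t.IsHomogeneous d) (hd : 7 ≠ d) :
    homogeneousComponent 7 t = 0 := by
  have h := homogeneousComponent_of_mem (m := 7) ((mem_homogeneousSubmodule d t).mpr ht)
  rwa [if_neg hd] at h

lemma compeq {t : MvPolynomial (Fin 3) ℂ} (ht : t.IsHomogeneous 7) :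
    homogeneousComponent 7 t = t := by
  have h := homogeneousComponent_of_mem (m := 7) ((mem_homogeneousSubmodule 7 t).mpr ht)
  rwa [if_pos rfl] at h

lemma descent {Hh Q : MvPolynomial (Fin 3) ℂ} {n : ℕ} (hsf : Squarefree Hh)
    (hHhom : Hh.IsHomogeneous n) (hH0 : Hh ≠ 0) {c d : ℂ} (hc : c ≠ 0)
    (hrel : ∀ i, C c * Q * pderiv i Hh = C d * Hh * pderiv i Q) :
    ∃ Q', Q = Hh * Q' ∧ ∀ i, C (c - d) * Q' * pderiv i Hh = C d * Hh * pderiv i Q' := by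
  have hdvd : ∀ i, Hh ∣ Q * pderiv i Hh := by
    intro i
    have h1 : Hh ∣ C c * Q * pderiv i Hh := by
      rw [hrel i]
      exact ⟨C d * pderiv i Q, by ring⟩
    have h2 : Hh ∣ C c⁻¹ * (C c * Q * pderiv i Hh) := h1.mul_left _
    rwa [show C c⁻¹ * (C c * Q * pderiv i Hh) = C c⁻¹ * C c * (Q * pderiv i Hh) by ring,
      ← map_mul, inv_mul_cancel₀ hc, map_one, one_mul] at h2
  obtain ⟨Q', rfl⟩ := SA.H_dvd_of hsf hHhom hdvd
  refine ⟨Q', rfl, fun i => ?_⟩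
  have h := hrel i
  rw [pderiv_mul] at h
  apply mul_left_cancel₀ hH0
  rw [map_sub]
  linear_combination h

theorem stmt4 (F2 F3 F4 G2 G3 G4 G5 G6 H : MvPolynomial (Fin 3) ℂ) (α : ℂ)
    (hF2 : F2.IsHomogeneous 2) (hF3 : F3.IsHomogeneous 3) (hF4 : F4.IsHomogeneous 4)
    (hG2 : G2.IsHomogeneous 2) (hG3 : G3.IsHomogeneous 3) (hG4 : G4.IsHomogeneous 4)
    (hG5 : G5.IsHomogeneous 5) (hG6 : G6.IsHomogeneous 6)
    (hHsf : Squarefree H) (hHhom : H.IsHomogeneous 2) (hα : α ≠ 0)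
    (hF4eq : F4 = H ^ 2) (hG6eq : G6 = C α * H ^ 3)
    (hbr : ∀ i j : Fin 3, (jacMinor (X 0 + F2 + F3 + F4) (X 2 + G2 + G3 + G4 + G5 + G6) i j).totalDegree < 7) :
    G5 = C ((3 / 2) * α) * H * F3 := by
  classical
  subst hF4eq
  subst hG6eq
  set P : MvPolynomial (Fin 3) ℂ := G5 - C ((3/2)*α) * H * F3 with hPdef
  have hH0 : H ≠ 0 := hHsf.ne_zero
  have hPhom : P.IsHomogeneous 5 := by
    refine hG5.sub ?_
    rw [mul_assoc]
    exact (by simpa using hHhom.mul hF3 : (H*F3).IsHomogeneous 5).C_mul _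
  have hH2 : (H^2 : MvPolynomial (Fin 3) ℂ).IsHomogeneous 4 := by simpa using hHhom.pow 2
  have hG6' : (C α * H^3 : MvPolynomial (Fin 3) ℂ).IsHomogeneous 6 := by
    simpa using (hHhom.pow 3).C_mul α
  have hx0 : (X 0 : MvPolynomial (Fin 3) ℂ).IsHomogeneous 1 := isHomogeneous_X _ _
  have hx2 : (X 2 : MvPolynomial (Fin 3) ℂ).IsHomogeneous 1 := isHomogeneous_X _ _
  have hA : ∀ i j : Fin 3, jacMinor F3 (C α * H^3) i j + jacMinor (H^2) G5 i j = 0 := by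
    intro i j
    have hexp : jacMinor (X 0 + F2 + F3 + H^2) (X 2 + G2 + G3 + G4 + G5 + C α * H^3) i j =
        jacMinor (X 0) (X 2) i j + jacMinor (X 0) G2 i j + jacMinor (X 0) G3 i j + jacMinor (X 0) G4 i j + jacMinor (X 0) G5 i j + jacMinor (X 0) (C α * H^3) i j + jacMinor F2 (X 2) i j + jacMinor F2 G2 i j + jacMinor F2 G3 i j + jacMinor F2 G4 i j + jacMinor F2 G5 i j + jacMinor F2 (C α * H^3) i j + jacMinor F3 (X 2) i j + jacMinor F3 G2 i j + jacMinor F3 G3 i j + jacMinor F3 G4 i j + jacMinor F3 G5 i j + jacMinor F3 (C α * H^3) i j + jacMinor (H^2) (X 2) i j + jacMinor (H^2) G2 i j + jacMinor (H^2) G3 i j + jacMinor (H^2) G4 i j + jacMinor (H^2) G5 i j + jacMinor (H^2) (C α * H^3) i j := by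
      simp only [jacMinor, map_add]
      ring
    have h7 := congrArg (homogeneousComponent 7) hexp
    rw [homogeneousComponent_eq_zero _ _ (hbr i j)] at h7
    simp only [map_add] at h7
    have cc0 : homogeneousComponent 7 (jacMinor (X 0) (X 2) i j) = 0 := compne (jac_homog hx0 hx2 i j) (by norm_num)
    have cc1 : homogeneousComponent 7 (jacMinor (X 0) G2 i j) = 0 := compne (jac_homog hx0 hG2 i j) (by norm_num)
    have cc2 : homogeneousComponent 7 (jacMinor (X 0) G3 i j) = 0 := compne (jac_homog hx0 hG3 i j) (by norm_num)
    have cc3 : homogeneousComponent 7 (jacMinor (X 0) G4 i j) = 0 := compne (jac_homog hx0 hG4 i j) (by norm_num)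
    have cc4 : homogeneousComponent 7 (jacMinor (X 0) G5 i j) = 0 := compne (jac_homog hx0 hG5 i j) (by norm_num)
    have cc5 : homogeneousComponent 7 (jacMinor (X 0) (C α * H^3) i j) = 0 := compne (jac_homog hx0 hG6' i j) (by norm_num)
    have cc6 : homogeneousComponent 7 (jacMinor F2 (X 2) i j) = 0 := compne (jac_homog hF2 hx2 i j) (by norm_num)
    have cc7 : homogeneousComponent 7 (jacMinor F2 G2 i j) = 0 := compne (jac_homog hF2 hG2 i j) (by norm_num)
    have cc8 : homogeneousComponent 7 (jacMinor F2 G3 i j) = 0 := compne (jac_homog hF2 hG3 i j) (by norm_num)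
    have cc9 : homogeneousComponent 7 (jacMinor F2 G4 i j) = 0 := compne (jac_homog hF2 hG4 i j) (by norm_num)
    have cc10 : homogeneousComponent 7 (jacMinor F2 G5 i j) = 0 := compne (jac_homog hF2 hG5 i j) (by norm_num)
    have cc11 : homogeneousComponent 7 (jacMinor F2 (C α * H^3) i j) = 0 := compne (jac_homog hF2 hG6' i j) (by norm_num)
    have cc12 : homogeneousComponent 7 (jacMinor F3 (X 2) i j) = 0 := compne (jac_homog hF3 hx2 i j) (by norm_num)
    have cc13 : homogeneousComponent 7 (jacMinor F3 G2 i j) = 0 := compne (jac_homog hF3 hG2 i j) (by norm_num)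
    have cc14 : homogeneousComponent 7 (jacMinor F3 G3 i j) = 0 := compne (jac_homog hF3 hG3 i j) (by norm_num)
    have cc15 : homogeneousComponent 7 (jacMinor F3 G4 i j) = 0 := compne (jac_homog hF3 hG4 i j) (by norm_num)
    have cc16 : homogeneousComponent 7 (jacMinor F3 G5 i j) = 0 := compne (jac_homog hF3 hG5 i j) (by norm_num)
    have cc17 : homogeneousComponent 7 (jacMinor F3 (C α * H^3) i j) = jacMinor F3 (C α * H^3) i j := compeq (by simpa using jac_homog hF3 hG6' i j)
    have cc18 : homogeneousComponent 7 (jacMinor (H^2) (X 2) i j) = 0 := compne (jac_homog hH2 hx2 i j) (by norm_num)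
    have cc19 : homogeneousComponent 7 (jacMinor (H^2) G2 i j) = 0 := compne (jac_homog hH2 hG2 i j) (by norm_num)
    have cc20 : homogeneousComponent 7 (jacMinor (H^2) G3 i j) = 0 := compne (jac_homog hH2 hG3 i j) (by norm_num)
    have cc21 : homogeneousComponent 7 (jacMinor (H^2) G4 i j) = 0 := compne (jac_homog hH2 hG4 i j) (by norm_num)
    have cc22 : homogeneousComponent 7 (jacMinor (H^2) G5 i j) = jacMinor (H^2) G5 i j := compeq (by simpa using jac_homog hH2 hG5 i j)
    have cc23 : homogeneousComponent 7 (jacMinor (H^2) (C α * H^3) i j) = 0 := compne (jac_homog hH2 hG6' i j) (by norm_num)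
    rw [cc0, cc1, cc2, cc3, cc4, cc5, cc6, cc7, cc8, cc9, cc10, cc11, cc12, cc13, cc14, cc15, cc16, cc17, cc18, cc19, cc20, cc21, cc22, cc23] at h7
    simp only [add_zero, zero_add] at h7
    exact h7.symm
  have hrelC : (2 : MvPolynomial (Fin 3) ℂ) * C ((3/2)*α) = 3 * C α := by
    have e1 : (C ((2:ℂ) * ((3/2)*α)) : MvPolynomial (Fin 3) ℂ) = C (2:ℂ) * C ((3/2)*α) :=
      map_mul C (2:ℂ) ((3/2)*α)
    have e2 : (C ((3:ℂ) * α) : MvPolynomial (Fin 3) ℂ) = C (3:ℂ) * C α := map_mul C (3:ℂ) α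
    have e3 : ((2:ℂ) * ((3/2)*α)) = (3:ℂ) * α := by ring
    rw [show (2 : MvPolynomial (Fin 3) ℂ) = C (2:ℂ) from (map_ofNat _ 2).symm,
      show (3 : MvPolynomial (Fin 3) ℂ) = C (3:ℂ) from (map_ofNat _ 3).symm, ← e1, ← e2, e3]
  have hjac : ∀ i j : Fin 3, jacMinor H P i j = 0 := by
    intro i j
    have hkey : H * (C (2:ℂ) * jacMinor H P i j)
        = jacMinor F3 (C α * H^3) i j + jacMinor (H^2) G5 i j := by
      simp only [hPdef, jacMinor, map_sub, pderiv_mul, pderiv_pow, pderiv_C_mul, pderiv_C,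
        Nat.cast_ofNat, map_ofNat]
      linear_combination (-(H^2) * (pderiv i H * pderiv j F3 - pderiv j H * pderiv i F3)) * hrelC
    rw [hA i j] at hkey
    rcases mul_eq_zero.mp hkey with h | h
    · exact absurd h hH0
    · rcases mul_eq_zero.mp h with h' | h'
      · exact absurd (C_eq_zero.mp h') two_ne_zero
      · exact h'
  have hc5 : ((5:ℕ) : MvPolynomial (Fin 3) ℂ) = C (5:ℂ) := by rw [map_ofNat]; simp
  have hc2 : ((2:ℕ) : MvPolynomial (Fin 3) ℂ) = C (2:ℂ) := by rw [map_ofNat]; simp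
  have heP : ∑ k, X k * pderiv k P = C (5:ℂ) * P := by rw [SA.euler hPhom, hc5]
  have heH : ∑ k, X k * pderiv k H = C (2:ℂ) * H := by rw [SA.euler hHhom, hc2]
  have hrel5 : ∀ i, C (5:ℂ) * P * pderiv i H = C (2:ℂ) * H * pderiv i P := by
    intro i
    calc C (5:ℂ) * P * pderiv i H = (∑ j, X j * pderiv j P) * pderiv i H := by rw [heP]
      _ = ∑ j, X j * pderiv j P * pderiv i H := Finset.sum_mul _ _ _
      _ = ∑ j, X j * pderiv j H * pderiv i P := by
          refine Finset.sum_congr rfl fun j _ => ?_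
          have e : pderiv i H * pderiv j P - pderiv j H * pderiv i P = 0 := by
            simpa [jacMinor] using hjac i j
          linear_combination X j * e
      _ = (∑ j, X j * pderiv j H) * pderiv i P := (Finset.sum_mul _ _ _).symm
      _ = C (2:ℂ) * H * pderiv i P := by rw [heH]
  obtain ⟨Q1, hQ1, hrel3⟩ := descent hHsf hHhom hH0 (show (5:ℂ) ≠ 0 by norm_num) hrel5
  obtain ⟨Q2, hQ2, hrel1⟩ := descent hHsf hHhom hH0 (show (5-2:ℂ) ≠ 0 by norm_num) hrel3
  obtain ⟨Q3, hQ3, _⟩ := descent hHsf hHhom hH0 (show (5-2-2:ℂ) ≠ 0 by norm_num) hrel1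
  have hPfac : P = H^3 * Q3 := by rw [hQ1, hQ2, hQ3]; ring
  have hP0 : P = 0 := by
    by_contra hne
    have hQ3ne : Q3 ≠ 0 := by
      rintro rfl
      rw [mul_zero] at hPfac
      exact hne hPfac
    have h3ne : (H^3 : MvPolynomial (Fin 3) ℂ) ≠ 0 := pow_ne_zero _ hH0
    have hfh : ((H^3) * Q3).IsHomogeneous 5 := hPfac ▸ hPhom
    obtain ⟨a, b, hab, hha, -⟩ := SA.homog_of_mul h3ne hQ3ne hfh
    have h6 : (H^3 : MvPolynomial (Fin 3) ℂ).IsHomogeneous 6 := by simpa using hHhom.pow 3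
    have ha6 : a = 6 := hha.inj_right h6 h3ne
    omega
  have hfin : G5 - C ((3/2)*α) * H * F3 = 0 := hP0
  have := sub_eq_zero.mp hfin
  simpa using this
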